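/- For 0 < κ < 1, the derivative of s ↦ s·B(s + κ(1-s), 1-κ) evaluated at s = 1/2 equals ((1-κ)/2)·π·cot((1-κ)π/2)·B((1+κ)/2, 1-κ), and this quantity is positive. -/

import Mathlib

noncomputable def betaFn (x y : ℝ) : ℝ := Real.Gamma x * Real.Gamma y / Real.Gamma (x + y)

theorem deriv_at_half_kappa_lt_one (κ : ℝ) (hκ0 : 0 < κ) (hκ1 : κ < 1) :
    deriv (fun s : ℝ => s * betaFn (s + κ * (1 - s)) (1 - κ)) (1/2)
      = ((1 - κ) / 2) * Real.pi * ((Real.cos ((1 - κ) / 2 * Real.pi)) / (Real.sin ((1 - κ) / 2 * Real.pi))) *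
        betaFn ((1 + κ) / 2) (1 - κ) ∧
    0 < ((1 - κ) / 2) * Real.pi * ((Real.cos ((1 - κ) / 2 * Real.pi)) / (Real.sin ((1 - κ) / 2 * Real.pi))) *
        betaFn ((1 + κ) / 2) (1 - κ) := by
  have pi_pos := Real.pi_pos
  set c : ℝ := 1 - κ with hc
  have hc0 : 0 < c := by simp [hc]; linarith
  have hc1 : c < 1 := by simp [hc]; linarith
  set a : ℝ := (1 + κ) / 2 with ha
  have ha0 : 0 < a := by positivity
  have ha1 : a = 1 - c / 2 := by simp [ha, hc]; ring
  -- basic nonvanishing facts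
  have hΓa : 0 < Real.Gamma a := Real.Gamma_pos_of_pos ha0
  have hΓc : 0 < Real.Gamma c := Real.Gamma_pos_of_pos hc0
  have hsin : 0 < Real.sin (Real.pi * (c / 2)) := by
    apply Real.sin_pos_of_pos_of_lt_pi
    · positivity
    · nlinarith
  have hcos : 0 < Real.cos (Real.pi * (c / 2)) := by
    apply Real.cos_pos_of_mem_Ioo
    constructor <;> nlinarith
  -- the simplified target value
  set E : ℝ := Real.Gamma c * Real.Gamma a ^ 2 * Real.cos (Real.pi * (c / 2)) with hE
  -- auxiliary function
  set F : ℝ → ℝ := fun s => Real.Gamma c / (c * Real.pi) *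
      (Real.Gamma (s * c + κ) * Real.Gamma (1 - s * c) * Real.sin (Real.pi * (s * c))) with hF
  -- Step A : eventual equality
  have heq : (fun s : ℝ => s * betaFn (s + κ * (1 - s)) (1 - κ)) =ᶠ[nhds (1/2 : ℝ)] F := by
    have hmem : Set.Ioo (0:ℝ) (1/c) ∈ nhds (1/2 : ℝ) := by
      apply Ioo_mem_nhds
      · norm_num
      · rw [lt_div_iff₀ hc0]; linarith
    filter_upwards [hmem] with s hs
    obtain ⟨hs0, hs1⟩ := hs
    have hu0 : 0 < s * c := by positivity
    have hu1 : s * c < 1 := (lt_div_iff₀ hc0).mp hs1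
    have hΓu : 0 < Real.Gamma (s * c) := Real.Gamma_pos_of_pos hu0
    have hΓ1u : 0 < Real.Gamma (1 - s * c) := Real.Gamma_pos_of_pos (by linarith)
    have hsinu : 0 < Real.sin (Real.pi * (s * c)) := by
      apply Real.sin_pos_of_pos_of_lt_pi
      · positivity
      · nlinarith
    have hx : s + κ * (1 - s) = s * c + κ := by rw [hc]; ring
    have hxc : s * c + κ + c = s * c + 1 := by rw [hc]; ring
    have hrec : Real.Gamma (s * c + 1) = (s * c) * Real.Gamma (s * c) :=
      Real.Gamma_add_one (ne_of_gt hu0)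
    have hrefl : Real.Gamma (s * c) * Real.Gamma (1 - s * c) = Real.pi / Real.sin (Real.pi * (s * c)) :=
      Real.Gamma_mul_Gamma_one_sub (s * c)
    have hΓu_eq : Real.Gamma (s * c) = Real.pi / (Real.sin (Real.pi * (s * c)) * Real.Gamma (1 - s * c)) := by
      rw [eq_div_iff (by positivity)]
      rw [show Real.Gamma (s * c) * (Real.sin (Real.pi * (s * c)) * Real.Gamma (1 - s * c))
          = (Real.Gamma (s * c) * Real.Gamma (1 - s * c)) * Real.sin (Real.pi * (s * c)) by ring, hrefl]
      exact div_mul_cancel₀ _ (ne_of_gt hsinu)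
    simp only [betaFn, hF, hx, hxc, hrec, hΓu_eq, ← hc]
    field_simp
  -- Step B : derivative of F at 1/2 is E
  have hval1 : (1/2 : ℝ) * c + κ = a := by rw [ha, hc]; ring
  have hval2 : 1 - (1/2 : ℝ) * c = a := by rw [ha, hc]; ring
  have hΓdiff : DifferentiableAt ℝ Real.Gamma a := by
    apply Real.differentiableAt_Gamma
    intro m
    have : (0:ℝ) ≤ m := Nat.cast_nonneg m
    intro h; rw [h] at ha0; linarith
  have hinner1 : HasDerivAt (fun s : ℝ => s * c + κ) c (1/2) :=
    (hasDerivAt_mul_const c).add_const κ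
  have hinner2 : HasDerivAt (fun s : ℝ => 1 - s * c) (-c) (1/2) := by
    simpa using ((hasDerivAt_mul_const c).const_sub 1)
  have hinner3 : HasDerivAt (fun s : ℝ => Real.pi * (s * c)) (Real.pi * c) (1/2) := by
    simpa [mul_comm, mul_assoc] using ((hasDerivAt_mul_const c).const_mul Real.pi)
  have hG1 : HasDerivAt (fun s : ℝ => Real.Gamma (s * c + κ)) (deriv Real.Gamma a * c) (1/2) := by
    have := hΓdiff.hasDerivAt
    rw [← hval1] at this
    have h2 := HasDerivAt.comp (1/2) this hinner1
    rw [hval1] at h2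
    exact h2
  have hG2 : HasDerivAt (fun s : ℝ => Real.Gamma (1 - s * c)) (deriv Real.Gamma a * (-c)) (1/2) := by
    have := hΓdiff.hasDerivAt
    rw [← hval2] at this
    have h2 := HasDerivAt.comp (1/2) this hinner2
    rw [hval2] at h2
    exact h2
  have hS : HasDerivAt (fun s : ℝ => Real.sin (Real.pi * (s * c)))
      (Real.cos (Real.pi * (c / 2)) * (Real.pi * c)) (1/2) := by
    have h := Real.hasDerivAt_sin (Real.pi * ((1/2 : ℝ) * c))
    have h2 := h.comp (1/2 : ℝ) hinner3
    have : Real.pi * ((1/2 : ℝ) * c) = Real.pi * (c / 2) := by ring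
    rw [this] at h2
    exact h2
  have hFd : HasDerivAt F E (1/2) := by
    have h := (((hG1.mul hG2).mul hS).const_mul (Real.Gamma c / (c * Real.pi)))
    have harg : Real.Gamma ((1/2 : ℝ) * c + κ) = Real.Gamma a := by rw [hval1]
    have harg2 : Real.Gamma (1 - (1/2 : ℝ) * c) = Real.Gamma a := by rw [hval2]
    have harg3 : Real.pi * ((1/2 : ℝ) * c) = Real.pi * (c / 2) := by ring
    rw [harg, harg2, harg3] at h
    refine HasDerivAt.congr_deriv h ?_
    simp only [Pi.mul_apply, harg, harg2]
    rw [hE, div_mul_eq_mul_div, div_eq_iff (ne_of_gt (by positivity : (0:ℝ) < c * Real.pi))]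
    ring
  have hderiv : deriv (fun s : ℝ => s * betaFn (s + κ * (1 - s)) (1 - κ)) (1/2) = E := by
    rw [heq.deriv_eq, hFd.deriv]
  -- Step C : RHS = E
  have hRHS : ((1 - κ) / 2) * Real.pi * ((Real.cos ((1 - κ) / 2 * Real.pi)) / (Real.sin ((1 - κ) / 2 * Real.pi))) *
        betaFn ((1 + κ) / 2) (1 - κ) = E := by
    have hac : (1 + κ) / 2 + (1 - κ) = c / 2 + 1 := by rw [hc]; ring
    have hrec : Real.Gamma (c / 2 + 1) = (c / 2) * Real.Gamma (c / 2) :=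
      Real.Gamma_add_one (by positivity)
    have hrefl : Real.Gamma (c / 2) * Real.Gamma (1 - c / 2) = Real.pi / Real.sin (Real.pi * (c / 2)) :=
      Real.Gamma_mul_Gamma_one_sub (c / 2)
    rw [← ha1] at hrefl
    have hΓc2 : 0 < Real.Gamma (c / 2) := Real.Gamma_pos_of_pos (by positivity)
    have hΓc2_eq : Real.Gamma (c / 2) = Real.pi / (Real.sin (Real.pi * (c / 2)) * Real.Gamma a) := by
      rw [eq_div_iff (by positivity)]
      rw [show Real.Gamma (c / 2) * (Real.sin (Real.pi * (c / 2)) * Real.Gamma a)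
          = (Real.Gamma (c / 2) * Real.Gamma a) * Real.sin (Real.pi * (c / 2)) by ring, hrefl]
      exact div_mul_cancel₀ _ (ne_of_gt hsin)
    have key : ∀ (p s g q C c2 : ℝ), p ≠ 0 → s ≠ 0 → g ≠ 0 → c2 ≠ 0 →
        c2 * p * (C / s) * (g * q / (c2 * (p / (s * g)))) = q * g ^ 2 * C := by
      intros p s g q C c2 hp hs hg hc2
      field_simp
    have hac' : a + c = c / 2 + 1 := by rw [ha, hc]; ring
    have harg : c / 2 * Real.pi = Real.pi * (c / 2) := by ring
    simp only [betaFn, ← ha, ← hc]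
    rw [hac', hrec, hΓc2_eq, hE, ← harg]
    exact key Real.pi (Real.sin (c / 2 * Real.pi)) (Real.Gamma a) (Real.Gamma c)
      (Real.cos (c / 2 * Real.pi)) (c / 2) (ne_of_gt pi_pos)
      (ne_of_gt (by rw [harg]; exact hsin)) (ne_of_gt hΓa) (by positivity)
  rw [hderiv, hRHS]
  exact ⟨rfl, by positivity⟩
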